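/- If λ = ω, then the countable topological space (X,τ) is metrizable. -/

import Mathlib

universe u v

open Ordinal Set Topology Cardinal

namespace LawsonExample

def Xset (lam : Cardinal.{u}) : Set (Ordinal.{u} → Fin 3) :=
  {x | (∀ γ : Ordinal.{u}, lam.ord ≤ γ → x γ = 2) ∧ {γ : Ordinal.{u} | x γ ≠ 2}.Finite}

noncomputable def nrm (x : Ordinal.{u} → Fin 3) : Ordinal.{u} :=
  sInf {α | ∀ γ, α ≤ γ → x γ = 2}

noncomputable def Vnbhd (lam : Cardinal.{u}) (x : ↥(Xset lam)) (α : Ordinal.{u}) :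
    Set ↥(Xset lam) :=
  if x.1 0 = 2 then {x}
  else if x.1 0 = 1 then
    {y | (∀ γ, 1 ≤ γ → γ < α → y.1 γ = x.1 γ) ∧
         (∀ γ, α ≤ γ → γ < lam.ord → y.1 γ ≠ 1) ∧
         (y.1 0 = 1 ∨ (y.1 0 = 2 ∧ α < nrm y.1))}
  else
    {y | (∀ γ, 1 ≤ γ → γ < α → y.1 γ = x.1 γ) ∧
         (y.1 0 = 0 ∨ (y.1 0 = 2 ∧ α < nrm y.1 ∧ y.1 (Ordinal.pred (nrm y.1)) = 1))}

def tauSet (lam : Cardinal.{u}) : Set (Set ↥(Xset lam)) :=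
  {U | ∀ x ∈ U, ∃ α : Ordinal.{u}, nrm x.1 ≤ α ∧ α < lam.ord ∧ Vnbhd lam x α ⊆ U}

lemma nrm_spec {lam : Cardinal.{u}} (x : ↥(Xset lam)) {γ : Ordinal.{u}}
    (h : nrm x.1 ≤ γ) : x.1 γ = 2 := by
  have hne : {α : Ordinal.{u} | ∀ γ, α ≤ γ → x.1 γ = 2}.Nonempty :=
    ⟨lam.ord, fun γ hγ => x.2.1 γ hγ⟩
  exact csInf_mem hne γ h

lemma nrm_lt {lam : Cardinal.{u}} (hlam : ℵ₀ ≤ lam) (x : ↥(Xset lam)) :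
    nrm x.1 < lam.ord := by
  have hlim : Order.IsSuccLimit lam.ord := Cardinal.isSuccLimit_ord hlam
  rcases eq_empty_or_nonempty {γ | x.1 γ ≠ 2} with he | hne
  · have h0 : nrm x.1 ≤ 0 := csInf_le' (fun γ _ => by
      by_contra hc
      exact (eq_empty_iff_forall_notMem.1 he γ) hc)
    exact lt_of_le_of_lt h0 hlim.bot_lt
  · set m := sSup {γ | x.1 γ ≠ 2} with hm_def
    have hmem : m ∈ {γ | x.1 γ ≠ 2} := hne.csSup_mem x.2.2
    have hm : m < lam.ord := lt_of_not_ge fun h => hmem (x.2.1 m h)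
    have hb : nrm x.1 ≤ m + 1 := csInf_le' (fun γ hγ => by
      by_contra hc
      have hle : γ ≤ m := le_csSup x.2.2.bddAbove hc
      rw [Ordinal.add_one_eq_succ] at hγ
      exact absurd hγ (not_le.2 (lt_of_le_of_lt hle (Order.lt_succ m))))
    have : m + 1 < lam.ord := by
      rw [Ordinal.add_one_eq_succ]; exact hlim.succ_lt hm
    exact lt_of_le_of_lt hb this

lemma fin3_cases (a : Fin 3) : a = 0 ∨ a = 1 ∨ a = 2 := by revert a; decide

lemma mem_Vnbhd_self {lam : Cardinal.{u}} (x : ↥(Xset lam)) {α : Ordinal.{u}}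
    (h : nrm x.1 ≤ α) : x ∈ Vnbhd lam x α := by
  rcases fin3_cases (x.1 0) with h0 | h0 | h0
  · have h2 : x.1 0 ≠ 2 := by rw [h0]; decide
    have h1 : x.1 0 ≠ 1 := by rw [h0]; decide
    rw [Vnbhd, if_neg h2, if_neg h1]
    exact ⟨fun γ _ _ => rfl, Or.inl h0⟩
  · have h2 : x.1 0 ≠ 2 := by rw [h0]; decide
    rw [Vnbhd, if_neg h2, if_pos h0]
    refine ⟨fun γ _ _ => rfl, fun γ hγ _ => ?_, Or.inl h0⟩
    rw [nrm_spec x (le_trans h hγ)]; decide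
  · rw [Vnbhd, if_pos h0]; exact rfl

lemma Vnbhd_mono {lam : Cardinal.{u}} (x : ↥(Xset lam)) {α β : Ordinal.{u}}
    (hα : nrm x.1 ≤ α) (hαβ : α ≤ β) : Vnbhd lam x β ⊆ Vnbhd lam x α := by
  rcases fin3_cases (x.1 0) with h0 | h0 | h0
  · have h2 : x.1 0 ≠ 2 := by rw [h0]; decide
    have h1 : x.1 0 ≠ 1 := by rw [h0]; decide
    rw [Vnbhd, Vnbhd, if_neg h2, if_neg h1, if_neg h2, if_neg h1]
    rintro y ⟨hr, hy⟩
    refine ⟨fun γ h1γ h2γ => hr γ h1γ (lt_of_lt_of_le h2γ hαβ), ?_⟩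
    rcases hy with hy | ⟨hy2, hylt, hyp⟩
    · exact Or.inl hy
    · exact Or.inr ⟨hy2, lt_of_le_of_lt hαβ hylt, hyp⟩
  · have h2 : x.1 0 ≠ 2 := by rw [h0]; decide
    rw [Vnbhd, Vnbhd, if_neg h2, if_pos h0, if_neg h2, if_pos h0]
    rintro y ⟨hr, hns, hy⟩
    have hα1 : 1 ≤ α := by
      by_contra hc
      have : α = 0 := Ordinal.lt_one_iff_zero.1 (not_le.1 hc)
      have : x.1 0 = 2 := nrm_spec x (by rw [← this]; exact hα)
      exact h2 this
    refine ⟨fun γ h1γ h2γ => hr γ h1γ (lt_of_lt_of_le h2γ hαβ), ?_, ?_⟩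
    · intro γ hγ hγlt
      by_cases hγβ : β ≤ γ
      · exact hns γ hγβ hγlt
      · have h1γ : 1 ≤ γ := le_trans hα1 hγ
        rw [hr γ h1γ (not_le.1 hγβ)]
        rw [nrm_spec x (le_trans hα hγ)]
        decide
    · rcases hy with hy | ⟨hy2, hylt⟩
      · exact Or.inl hy
      · exact Or.inr ⟨hy2, lt_of_le_of_lt hαβ hylt⟩
  · rw [Vnbhd, Vnbhd, if_pos h0, if_pos h0]

noncomputable def tau (lam : Cardinal.{u}) (hlam : ℵ₀ ≤ lam) :
    TopologicalSpace ↥(Xset lam) where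
  IsOpen U := U ∈ tauSet lam
  isOpen_univ := fun x _ =>
    ⟨nrm x.1, le_rfl, nrm_lt hlam x, subset_univ _⟩
  isOpen_inter := by
    intro U V hU hV x hx
    obtain ⟨α, hα1, hα2, hα3⟩ := hU x hx.1
    obtain ⟨β, hβ1, hβ2, hβ3⟩ := hV x hx.2
    refine ⟨max α β, le_trans hα1 (le_max_left _ _), max_lt hα2 hβ2, fun y hy => ?_⟩
    exact ⟨hα3 (Vnbhd_mono x hα1 (le_max_left _ _) hy),
           hβ3 (Vnbhd_mono x hβ1 (le_max_right _ _) hy)⟩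
  isOpen_sUnion := by
    intro S hS x hx
    obtain ⟨U, hU, hxU⟩ := hx
    obtain ⟨α, hα1, hα2, hα3⟩ := hS U hU x hxU
    exact ⟨α, hα1, hα2, fun y hy => ⟨U, hU, hα3 hy⟩⟩


/-- The semilattice operation of `X`: pointwise minimum. -/
noncomputable def pmin (lam : Cardinal.{u}) (x y : ↥(Xset lam)) : ↥(Xset lam) :=
  ⟨fun γ => min (x.1 γ) (y.1 γ), by
    constructor
    · intro γ hγ
      show min (x.1 γ) (y.1 γ) = 2
      rw [x.2.1 γ hγ, y.2.1 γ hγ, min_self]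
    · refine (x.2.2.union y.2.2).subset fun γ hγ => ?_
      have hγ' : min (x.1 γ) (y.1 γ) ≠ 2 := hγ
      simp only [mem_union, mem_setOf_eq]
      by_contra hc
      push_neg at hc
      rw [hc.1, hc.2, min_self] at hγ'
      exact hγ' rfl⟩

/-- `B` is a base of the topology `t`: it consists of open sets, and every open set is a
union of members of `B`. -/
def IsBase {X : Type v} (t : TopologicalSpace X) (B : Set (Set X)) : Prop :=
  (∀ U ∈ B, IsOpen[t] U) ∧ ∀ U, IsOpen[t] U → ∃ S ⊆ B, U = ⋃₀ S

/-- The family `ℬ = {V_α(x) : x ∈ X, α ∈ [‖x‖, λ)}`. -/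
def Vfamily (lam : Cardinal.{u}) : Set (Set ↥(Xset lam)) :=
  {W | ∃ (x : ↥(Xset lam)) (α : Ordinal.{u}), nrm x.1 ≤ α ∧ α < lam.ord ∧ W = Vnbhd lam x α}

/-- The weight of a topological space: the smallest cardinality of a base of its topology. -/
noncomputable def weight {X : Type v} (t : TopologicalSpace X) : Cardinal.{v} :=
  sInf {c : Cardinal.{v} | ∃ B : Set (Set X), IsBase t B ∧ c = Cardinal.mk ↥B}

/-- The function `𝟎_β`, with `𝟎_β β = 0` and `𝟎_β γ = 2` for `γ ≠ β`. -/
noncomputable def zeroF (β : Ordinal.{u}) : Ordinal.{u} → Fin 3 :=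
  fun γ => if γ = β then 0 else 2

/-- The function `𝟏_β`, with `𝟏_β β = 1` and `𝟏_β γ = 2` for `γ ≠ β`. -/
noncomputable def oneF (β : Ordinal.{u}) : Ordinal.{u} → Fin 3 :=
  fun γ => if γ = β then 1 else 2

lemma zeroF_mem (lam : Cardinal.{u}) {β : Ordinal.{u}} (h : β < lam.ord) :
    zeroF β ∈ Xset lam := by
  constructor
  · intro γ hγ
    have hne : γ ≠ β := fun e => absurd h (not_lt.2 (e ▸ hγ))
    simp [zeroF, hne]
  · refine (finite_singleton β).subset fun γ hγ => ?_
    simp only [mem_setOf_eq, zeroF] at hγ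
    by_contra hc
    simp only [mem_singleton_iff] at hc
    rw [if_neg hc] at hγ
    exact hγ rfl

lemma oneF_mem (lam : Cardinal.{u}) {β : Ordinal.{u}} (h : β < lam.ord) :
    oneF β ∈ Xset lam := by
  constructor
  · intro γ hγ
    have hne : γ ≠ β := fun e => absurd h (not_lt.2 (e ▸ hγ))
    simp [oneF, hne]
  · refine (finite_singleton β).subset fun γ hγ => ?_
    simp only [mem_setOf_eq, oneF] at hγ
    by_contra hc
    simp only [mem_singleton_iff] at hc
    rw [if_neg hc] at hγ
    exact hγ rfl

/-- `𝟎_β` as an element of `X` (for `β < λ`). -/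
noncomputable def zeroE (lam : Cardinal.{u}) {β : Ordinal.{u}} (h : β < lam.ord) :
    ↥(Xset lam) := ⟨zeroF β, zeroF_mem lam h⟩

/-- `𝟏_β` as an element of `X` (for `β < λ`). -/
noncomputable def oneE (lam : Cardinal.{u}) {β : Ordinal.{u}} (h : β < lam.ord) :
    ↥(Xset lam) := ⟨oneF β, oneF_mem lam h⟩


/-! ### Auxiliary lemmas for Statement 13 -/

lemma lt_nrm_of_ne {lam : Cardinal.{u}} (x : ↥(Xset lam)) {γ : Ordinal.{u}}
    (h : x.1 γ ≠ 2) : γ < nrm x.1 := by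
  by_contra hc
  exact h (nrm_spec x (not_lt.1 hc))

lemma one_le_nrm {lam : Cardinal.{u}} (x : ↥(Xset lam)) (h : x.1 0 ≠ 2) :
    1 ≤ nrm x.1 :=
  Order.one_le_iff_pos.2 (lt_nrm_of_ne x h)

lemma le_pred_of_lt {a b : Ordinal.{u}} (h : b < a) : b ≤ Ordinal.pred a := by
  by_cases hs : ∃ c, a = Order.succ c
  · obtain ⟨c, rfl⟩ := hs
    rw [Ordinal.pred_succ]
    exact Order.lt_succ_iff.1 h
  · rw [Ordinal.pred_eq_iff_isSuccPrelimit.2 (fun c hc => hs ⟨c, hc.succ_eq.symm⟩)]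
    exact h.le

lemma mem_V2 {lam : Cardinal.{u}} {x y : ↥(Xset lam)} (h : x.1 0 = 2) {α : Ordinal.{u}} :
    y ∈ Vnbhd lam x α ↔ y = x := by
  rw [Vnbhd, if_pos h, mem_singleton_iff]

lemma mem_V1 {lam : Cardinal.{u}} {x y : ↥(Xset lam)} (h : x.1 0 = 1) {α : Ordinal.{u}} :
    y ∈ Vnbhd lam x α ↔
      (∀ γ, 1 ≤ γ → γ < α → y.1 γ = x.1 γ) ∧
      (∀ γ, α ≤ γ → γ < lam.ord → y.1 γ ≠ 1) ∧
      (y.1 0 = 1 ∨ (y.1 0 = 2 ∧ α < nrm y.1)) := by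
  have h2 : x.1 0 ≠ 2 := by rw [h]; decide
  rw [Vnbhd, if_neg h2, if_pos h]
  exact Iff.rfl

lemma mem_V0 {lam : Cardinal.{u}} {x y : ↥(Xset lam)} (h : x.1 0 = 0) {α : Ordinal.{u}} :
    y ∈ Vnbhd lam x α ↔
      (∀ γ, 1 ≤ γ → γ < α → y.1 γ = x.1 γ) ∧
      (y.1 0 = 0 ∨ (y.1 0 = 2 ∧ α < nrm y.1 ∧ y.1 (Ordinal.pred (nrm y.1)) = 1)) := by
  have h2 : x.1 0 ≠ 2 := by rw [h]; decide
  have h1 : x.1 0 ≠ 1 := by rw [h]; decide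
  rw [Vnbhd, if_neg h2, if_neg h1]
  exact Iff.rfl

/-- Basic neighborhoods shrink inside each other. -/
lemma Vnbhd_shrink {lam : Cardinal.{u}} {x y : ↥(Xset lam)} {α : Ordinal.{u}}
    (hα : nrm x.1 ≤ α) (hy : y ∈ Vnbhd lam x α) :
    Vnbhd lam y (max α (nrm y.1)) ⊆ Vnbhd lam x α := by
  set β := max α (nrm y.1) with hβ
  have hαβ : α ≤ β := le_max_left _ _
  rcases fin3_cases (x.1 0) with h0 | h0 | h0
  · -- x(0) = 0
    rw [mem_V0 h0] at hy
    obtain ⟨hr, hy0⟩ := hy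
    rcases hy0 with hy0 | ⟨hy0, hlt, hp⟩
    · -- y(0) = 0
      intro z hz
      rw [mem_V0 hy0] at hz
      obtain ⟨hr', hz0⟩ := hz
      rw [mem_V0 h0]
      refine ⟨fun γ h1 h2 => ?_, ?_⟩
      · rw [hr' γ h1 (lt_of_lt_of_le h2 hαβ)]; exact hr γ h1 h2
      · rcases hz0 with hz0 | ⟨hz0, hlt, hp⟩
        · exact Or.inl hz0
        · exact Or.inr ⟨hz0, lt_of_le_of_lt hαβ hlt, hp⟩
    · -- y(0) = 2
      intro z hz
      rw [mem_V2 hy0] at hz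
      subst hz
      rw [mem_V0 h0]
      exact ⟨hr, Or.inr ⟨hy0, hlt, hp⟩⟩
  · -- x(0) = 1
    have hx2 : x.1 0 ≠ 2 := by rw [h0]; decide
    rw [mem_V1 h0] at hy
    obtain ⟨hr, hns, hy0⟩ := hy
    have hα1 : 1 ≤ α := le_trans (one_le_nrm x hx2) hα
    rcases hy0 with hy0 | ⟨hy0, hlt⟩
    · -- y(0) = 1
      intro z hz
      rw [mem_V1 hy0] at hz
      obtain ⟨hr', hns', hz0⟩ := hz
      rw [mem_V1 h0]
      refine ⟨fun γ h1 h2 => ?_, fun γ hγ hγo => ?_, ?_⟩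
      · rw [hr' γ h1 (lt_of_lt_of_le h2 hαβ)]; exact hr γ h1 h2
      · by_cases hβγ : β ≤ γ
        · exact hns' γ hβγ hγo
        · rw [hr' γ (le_trans hα1 hγ) (not_le.1 hβγ)]
          exact hns γ hγ hγo
      · rcases hz0 with hz0 | ⟨hz0, hlt'⟩
        · exact Or.inl hz0
        · exact Or.inr ⟨hz0, lt_of_le_of_lt hαβ hlt'⟩
    · -- y(0) = 2
      intro z hz
      rw [mem_V2 hy0] at hz
      subst hz
      rw [mem_V1 h0]
      exact ⟨hr, hns, Or.inr ⟨hy0, hlt⟩⟩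
  · -- x(0) = 2
    rw [mem_V2 h0] at hy
    subst hy
    intro z hz
    rw [mem_V2 h0] at hz ⊢
    exact hz

lemma Vnbhd_mem_tauSet {lam : Cardinal.{u}} (hlam : ℵ₀ ≤ lam) (x : ↥(Xset lam))
    {α : Ordinal.{u}} (hα : nrm x.1 ≤ α) (hord : α < lam.ord) :
    Vnbhd lam x α ∈ tauSet lam := fun y hy =>
  ⟨max α (nrm y.1), le_max_right _ _, max_lt hord (nrm_lt hlam y), Vnbhd_shrink hα hy⟩

lemma fin3_conflict {a : Fin 3} {i j : Fin 3} (hij : i ≠ j) (h1 : a = i) (h2 : a = j) : False :=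
  hij (h1 ▸ h2 ▸ rfl)

/-- Basic neighborhoods are closed: their complements are open. -/
lemma Vnbhd_compl_mem_tauSet {lam : Cardinal.{u}} (hlam : ℵ₀ ≤ lam) (x : ↥(Xset lam))
    {α : Ordinal.{u}} (hα : nrm x.1 ≤ α) (hord : α < lam.ord) :
    (Vnbhd lam x α)ᶜ ∈ tauSet lam := by
  intro z hz
  rcases fin3_cases (z.1 0) with hz0 | hz0 | hz0
  · -- z(0) = 0
    rcases fin3_cases (x.1 0) with h0 | h0 | h0
    · -- x(0) = 0 : z differs from x somewhere on [1, α)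
      have hnr : ¬(∀ γ, 1 ≤ γ → γ < α → z.1 γ = x.1 γ) := by
        intro hr
        exact hz ((mem_V0 h0).2 ⟨hr, Or.inl hz0⟩)
      push_neg at hnr
      obtain ⟨γ, h1γ, h2γ, hne⟩ := hnr
      refine ⟨max α (nrm z.1), le_max_right _ _,
        max_lt hord (nrm_lt hlam z), fun w hw hwx => ?_⟩
      rw [mem_V0 hz0] at hw
      rw [mem_V0 h0] at hwx
      have h1 : w.1 γ = z.1 γ := hw.1 γ h1γ (lt_of_lt_of_le h2γ (le_max_left _ _))
      have h2 : w.1 γ = x.1 γ := hwx.1 γ h1γ h2γ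
      exact hne (h1 ▸ h2)
    · -- x(0) = 1
      refine ⟨max α (nrm z.1), le_max_right _ _,
        max_lt hord (nrm_lt hlam z), fun w hw hwx => ?_⟩
      rw [mem_V0 hz0] at hw
      rw [mem_V1 h0] at hwx
      rcases hw.2 with hw0 | ⟨hw0, hb, hp⟩
      · rcases hwx.2.2 with hw1 | ⟨hw1, _⟩
        · exact fin3_conflict (by decide : (0 : Fin 3) ≠ 1) hw0 hw1
        · exact fin3_conflict (by decide : (0 : Fin 3) ≠ 2) hw0 hw1
      · have hple : α ≤ Ordinal.pred (nrm w.1) :=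
          le_trans (le_max_left _ _) (le_pred_of_lt hb)
        have hplt : Ordinal.pred (nrm w.1) < lam.ord :=
          lt_of_le_of_lt (Ordinal.pred_le_self _) (nrm_lt hlam w)
        exact hwx.2.1 _ hple hplt hp
    · -- x(0) = 2 : V is {x}, exclude x
      refine ⟨max (nrm z.1) (nrm x.1), le_max_left _ _,
        max_lt (nrm_lt hlam z) (nrm_lt hlam x), fun w hw hwx => ?_⟩
      rw [mem_V2 h0] at hwx
      subst hwx
      rw [mem_V0 hz0] at hw
      rcases hw.2 with hw0 | ⟨_, hb, _⟩
      · exact fin3_conflict (by decide : (2 : Fin 3) ≠ 0) h0 hw0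
      · exact absurd hb (not_lt.2 (le_max_right _ _))
  · -- z(0) = 1
    rcases fin3_cases (x.1 0) with h0 | h0 | h0
    · -- x(0) = 0
      refine ⟨max α (nrm z.1), le_max_right _ _,
        max_lt hord (nrm_lt hlam z), fun w hw hwx => ?_⟩
      rw [mem_V1 hz0] at hw
      rw [mem_V0 h0] at hwx
      rcases hwx.2 with hw0 | ⟨hw0, _, hp⟩
      · rcases hw.2.2 with hw1 | ⟨hw1, _⟩
        · exact fin3_conflict (by decide : (1 : Fin 3) ≠ 0) hw1 hw0
        · exact fin3_conflict (by decide : (2 : Fin 3) ≠ 0) hw1 hw0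
      · rcases hw.2.2 with hw1 | ⟨_, hb⟩
        · exact fin3_conflict (by decide : (1 : Fin 3) ≠ 2) hw1 hw0
        · have hple : max α (nrm z.1) ≤ Ordinal.pred (nrm w.1) := le_pred_of_lt hb
          have hplt : Ordinal.pred (nrm w.1) < lam.ord :=
            lt_of_le_of_lt (Ordinal.pred_le_self _) (nrm_lt hlam w)
          exact hw.2.1 _ hple hplt hp
    · -- x(0) = 1
      have hx2 : x.1 0 ≠ 2 := by rw [h0]; decide
      have hα1 : 1 ≤ α := le_trans (one_le_nrm x hx2) hα
      have hnr : ¬((∀ γ, 1 ≤ γ → γ < α → z.1 γ = x.1 γ) ∧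
          (∀ γ, α ≤ γ → γ < lam.ord → z.1 γ ≠ 1)) := by
        intro ⟨ha, hb⟩
        exact hz ((mem_V1 h0).2 ⟨ha, hb, Or.inl hz0⟩)
      rcases not_and_or.1 hnr with hnr | hnr
      · push_neg at hnr
        obtain ⟨γ, h1γ, h2γ, hne⟩ := hnr
        refine ⟨max α (nrm z.1), le_max_right _ _,
          max_lt hord (nrm_lt hlam z), fun w hw hwx => ?_⟩
        rw [mem_V1 hz0] at hw
        rw [mem_V1 h0] at hwx
        have h1 : w.1 γ = z.1 γ := hw.1 γ h1γ (lt_of_lt_of_le h2γ (le_max_left _ _))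
        have h2 : w.1 γ = x.1 γ := hwx.1 γ h1γ h2γ
        exact hne (h1 ▸ h2)
      · push_neg at hnr
        obtain ⟨γ, h1γ, h2γ, hone⟩ := hnr
        have hγz : γ < nrm z.1 := lt_nrm_of_ne z (by rw [hone]; decide)
        refine ⟨max α (nrm z.1), le_max_right _ _,
          max_lt hord (nrm_lt hlam z), fun w hw hwx => ?_⟩
        rw [mem_V1 hz0] at hw
        rw [mem_V1 h0] at hwx
        have h1 : w.1 γ = z.1 γ :=
          hw.1 γ (le_trans hα1 h1γ) (lt_of_lt_of_le hγz (le_max_right _ _))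
        exact hwx.2.1 γ h1γ h2γ (h1.trans hone)
    · -- x(0) = 2
      refine ⟨max (nrm z.1) (nrm x.1), le_max_left _ _,
        max_lt (nrm_lt hlam z) (nrm_lt hlam x), fun w hw hwx => ?_⟩
      rw [mem_V2 h0] at hwx
      subst hwx
      rw [mem_V1 hz0] at hw
      rcases hw.2.2 with hw1 | ⟨_, hb⟩
      · exact fin3_conflict (by decide : (2 : Fin 3) ≠ 1) h0 hw1
      · exact absurd hb (not_lt.2 (le_max_right _ _))
  · -- z(0) = 2 : its neighborhood is the singleton {z}
    refine ⟨nrm z.1, le_rfl, nrm_lt hlam z, fun w hw => ?_⟩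
    rw [mem_V2 hz0] at hw
    subst hw
    exact hz

/-- Separation: distinct points are separated by a basic neighborhood of the first. -/
lemma exists_sep {lam : Cardinal.{u}} (hlam : ℵ₀ ≤ lam) (x y : ↥(Xset lam)) (hne : x ≠ y) :
    ∃ α : Ordinal.{u}, nrm x.1 ≤ α ∧ α < lam.ord ∧ y ∉ Vnbhd lam x α := by
  have hfne : x.1 ≠ y.1 := fun h => hne (Subtype.ext h)
  rcases fin3_cases (x.1 0) with h0 | h0 | h0
  · -- x(0) = 0
    rcases fin3_cases (y.1 0) with hy0 | hy0 | hy0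
    · -- both 0 : differ at γ ≥ 1
      obtain ⟨γ, hγ⟩ := Function.ne_iff.1 hfne
      have hγ0 : γ ≠ 0 := by
        intro h
        subst h
        exact hγ (h0.trans hy0.symm)
      have hγord : γ < lam.ord := by
        by_contra hc
        exact hγ ((x.2.1 γ (not_lt.1 hc)).trans (y.2.1 γ (not_lt.1 hc)).symm)
      refine ⟨max (nrm x.1) (γ + 1), le_max_left _ _,
        max_lt (nrm_lt hlam x) (by
          rw [Ordinal.add_one_eq_succ]
          exact (Cardinal.isSuccLimit_ord hlam).succ_lt hγord), fun hmem => ?_⟩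
      rw [mem_V0 h0] at hmem
      exact hγ (hmem.1 γ (Ordinal.one_le_iff_ne_zero.2 hγ0)
        (lt_of_lt_of_le (Order.lt_succ γ) (by
          rw [← Ordinal.add_one_eq_succ]; exact le_max_right _ _))).symm
    · -- y(0) = 1
      refine ⟨nrm x.1, le_rfl, nrm_lt hlam x, fun hmem => ?_⟩
      rw [mem_V0 h0] at hmem
      rcases hmem.2 with h | ⟨h, _⟩
      · exact fin3_conflict (by decide : (1 : Fin 3) ≠ 0) hy0 h
      · exact fin3_conflict (by decide : (1 : Fin 3) ≠ 2) hy0 h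
    · -- y(0) = 2
      refine ⟨max (nrm x.1) (nrm y.1), le_max_left _ _,
        max_lt (nrm_lt hlam x) (nrm_lt hlam y), fun hmem => ?_⟩
      rw [mem_V0 h0] at hmem
      rcases hmem.2 with h | ⟨_, hb, _⟩
      · exact fin3_conflict (by decide : (2 : Fin 3) ≠ 0) hy0 h
      · exact absurd hb (not_lt.2 (le_max_right _ _))
  · -- x(0) = 1
    rcases fin3_cases (y.1 0) with hy0 | hy0 | hy0
    · -- y(0) = 0
      refine ⟨nrm x.1, le_rfl, nrm_lt hlam x, fun hmem => ?_⟩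
      rw [mem_V1 h0] at hmem
      rcases hmem.2.2 with h | ⟨h, _⟩
      · exact fin3_conflict (by decide : (0 : Fin 3) ≠ 1) hy0 h
      · exact fin3_conflict (by decide : (0 : Fin 3) ≠ 2) hy0 h
    · -- both 1 : differ at γ ≥ 1
      obtain ⟨γ, hγ⟩ := Function.ne_iff.1 hfne
      have hγ0 : γ ≠ 0 := by
        intro h
        subst h
        exact hγ (h0.trans hy0.symm)
      have hγord : γ < lam.ord := by
        by_contra hc
        exact hγ ((x.2.1 γ (not_lt.1 hc)).trans (y.2.1 γ (not_lt.1 hc)).symm)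
      refine ⟨max (nrm x.1) (γ + 1), le_max_left _ _,
        max_lt (nrm_lt hlam x) (by
          rw [Ordinal.add_one_eq_succ]
          exact (Cardinal.isSuccLimit_ord hlam).succ_lt hγord), fun hmem => ?_⟩
      rw [mem_V1 h0] at hmem
      exact hγ (hmem.1 γ (Ordinal.one_le_iff_ne_zero.2 hγ0)
        (lt_of_lt_of_le (Order.lt_succ γ) (by
          rw [← Ordinal.add_one_eq_succ]; exact le_max_right _ _))).symm
    · -- y(0) = 2
      refine ⟨max (nrm x.1) (nrm y.1), le_max_left _ _,
        max_lt (nrm_lt hlam x) (nrm_lt hlam y), fun hmem => ?_⟩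
      rw [mem_V1 h0] at hmem
      rcases hmem.2.2 with h | ⟨_, hb⟩
      · exact fin3_conflict (by decide : (2 : Fin 3) ≠ 1) hy0 h
      · exact absurd hb (not_lt.2 (le_max_right _ _))
  · -- x(0) = 2
    refine ⟨nrm x.1, le_rfl, nrm_lt hlam x, fun hmem => ?_⟩
    rw [mem_V2 h0] at hmem
    exact hne hmem.symm

/-- Encoding of `X` by finite graphs over `ℕ` (relevant when `λ = ℵ₀`). -/
noncomputable def Fenc {lam : Cardinal.{u}} (x : ↥(Xset lam)) : Finset (ℕ × Fin 3) :=
  (x.2.2.preimage (f := (Nat.cast : ℕ → Ordinal.{u}))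
    (Nat.cast_injective.injOn)).toFinset.image (fun n => (n, x.1 n))

lemma Fenc_eq {lam : Cardinal.{u}} {x y : ↥(Xset lam)} (h : Fenc x = Fenc y) {n : ℕ}
    (hn : x.1 n ≠ 2) : y.1 n = x.1 n := by
  have hmem : ((n : ℕ), x.1 n) ∈ Fenc x :=
    Finset.mem_image.2 ⟨n, (Set.Finite.mem_toFinset _).2 hn, rfl⟩
  rw [h] at hmem
  obtain ⟨m, _, heq⟩ := Finset.mem_image.1 hmem
  rw [Prod.mk.injEq] at heq
  obtain ⟨h1, h2⟩ := heq
  subst h1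
  exact h2

lemma countable_Xset (lam : Cardinal.{u}) (heq : lam = Cardinal.aleph0) :
    Countable ↥(Xset lam) := by
  have hinj : Function.Injective (Fenc (lam := lam)) := by
    intro x y h
    apply Subtype.ext
    funext γ
    by_cases hγ : γ < lam.ord
    · rw [heq, Cardinal.ord_aleph0] at hγ
      obtain ⟨n, rfl⟩ := Ordinal.lt_omega0.1 hγ
      by_cases hx : x.1 n = 2
      · by_cases hy : y.1 n = 2
        · rw [hx, hy]
        · rw [Fenc_eq h.symm hy] at hx
          exact absurd hx hy
      · exact (Fenc_eq h hx).symm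
    · rw [x.2.1 γ (not_lt.1 hγ), y.2.1 γ (not_lt.1 hγ)]
  exact hinj.countable

lemma countable_Vfamily (lam : Cardinal.{u}) (heq : lam = Cardinal.aleph0) :
    (Vfamily lam).Countable := by
  haveI := countable_Xset lam heq
  have hsub : Vfamily lam ⊆
      Set.range (fun p : ↥(Xset lam) × ℕ => Vnbhd lam p.1 (p.2 : Ordinal.{u})) := by
    rintro W ⟨x, α, _, h2, rfl⟩
    rw [heq, Cardinal.ord_aleph0] at h2
    obtain ⟨n, rfl⟩ := Ordinal.lt_omega0.1 h2
    exact ⟨(x, n), rfl⟩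
  exact Set.Countable.mono hsub (Set.countable_range _)

lemma isBasis_Vfamily {lam : Cardinal.{u}} (hlam : ℵ₀ ≤ lam) :
    @TopologicalSpace.IsTopologicalBasis _ (tau lam hlam) (Vfamily lam) := by
  letI := tau lam hlam
  apply TopologicalSpace.isTopologicalBasis_of_isOpen_of_nhds
  · rintro W ⟨x, α, h1, h2, rfl⟩
    exact Vnbhd_mem_tauSet hlam x h1 h2
  · intro x U hxU hU
    obtain ⟨α, h1, h2, h3⟩ := hU x hxU
    exact ⟨Vnbhd lam x α, ⟨x, α, h1, h2, rfl⟩, mem_Vnbhd_self x h1, h3⟩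

/-- If `λ = ω` then the countable topological space `(X, τ)` is
metrizable. -/
theorem metrizable_tau_of_aleph0 (lam : Cardinal.{u}) (hlam : ℵ₀ ≤ lam)
    (heq : lam = Cardinal.aleph0) :
    Countable ↥(Xset lam) ∧
    @TopologicalSpace.MetrizableSpace ↥(Xset lam) (tau lam hlam) := by
  haveI hc : Countable ↥(Xset lam) := countable_Xset lam heq
  refine ⟨hc, ?_⟩
  letI := tau lam hlam
  haveI : SecondCountableTopology ↥(Xset lam) :=
    (isBasis_Vfamily hlam).secondCountableTopology (countable_Vfamily lam heq)
  haveI hreg : RegularSpace ↥(Xset lam) := by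
    apply RegularSpace.of_exists_mem_nhds_isClosed_subset
    intro x s hs
    obtain ⟨U, hUs, hUopen, hxU⟩ := mem_nhds_iff.1 hs
    obtain ⟨α, h1, h2, h3⟩ := hUopen x hxU
    refine ⟨Vnbhd lam x α, ?_, ?_, h3.trans hUs⟩
    · exact IsOpen.mem_nhds (Vnbhd_mem_tauSet hlam x h1 h2) (mem_Vnbhd_self x h1)
    · rw [← isOpen_compl_iff]
      exact Vnbhd_compl_mem_tauSet hlam x h1 h2
  haveI ht0 : T0Space ↥(Xset lam) := by
    refine ⟨fun x y hxy => ?_⟩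
    by_contra hne
    obtain ⟨α, h1, h2, hy⟩ := exists_sep hlam x y hne
    have hopen : IsOpen (Vnbhd lam x α) := Vnbhd_mem_tauSet hlam x h1 h2
    exact hy ((hxy.mem_open_iff hopen).1 (mem_Vnbhd_self x h1))
  haveI : T3Space ↥(Xset lam) := { toT0Space := ht0, toRegularSpace := hreg }
  infer_instance

end LawsonExample
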